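/- Let a, b ≥ 2 be integers, set g = gcd(a-1, b), and let k = 1 - (a-1+b)/g (an integer since g divides a-1+b, and k ≤ 0). Then: X_k = Y_k = {(a-1)/g}, W_k = ∅, and Z_{i,k} = ∅ for every integer i with 1 ≤ i ≤ b-2. -/

import Mathlib

/-- For the chain-type polynomial with `g = gcd(a-1,b)` and
`k = 1 - (a-1+b)/g`, the sets `X_k` and `Y_k` both equal `{(a-1)/g}`, while
`W_k` and all the `Z_{i,k}` are empty. -/
theorem chain_first_concentrated_degree (a b g k : ℤ) (ha : 2 ≤ a) (hb : 2 ≤ b)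
    (hg : g = (Int.gcd (a - 1) b : ℤ)) (hk : k = 1 - (a - 1 + b) / g) :
    {m : ℤ | 0 ≤ m ∧ 0 ≤ (a + b - 1) * m + (a - 1) * k ∧
        (a + b - 1) * m + (a - 1) * k ≤ 2 * (a - 1)} = {(a - 1) / g} ∧
    {m : ℤ | 0 ≤ m ∧ (a + b - 1) * m = (a - 1) * (1 - k)} = {(a - 1) / g} ∧
    {m : ℤ | m ≤ -k ∧ 1 ≤ -(a + b - 1) * m - (a - 1) * k ∧
        -(a + b - 1) * m - (a - 1) * k ≤ b - 2} = (∅ : Set ℤ) ∧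
    ∀ i : ℤ, 1 ≤ i → i ≤ b - 2 →
      {m : ℤ | 1 ≤ (a + b - 1) * m + i + (a - 1) * k ∧
          (a + b - 1) * m + i + (a - 1) * k ≤ a - 2} = (∅ : Set ℤ) := by
  have hgpos : 0 < g := by
    rw [hg]
    have : 0 < Int.gcd (a - 1) b := Int.gcd_pos_iff.mpr (Or.inr (by omega))
    exact_mod_cast this
  obtain ⟨A, hA⟩ : g ∣ (a - 1) := hg ▸ Int.gcd_dvd_left (a - 1) b
  obtain ⟨B, hB⟩ : g ∣ b := hg ▸ Int.gcd_dvd_right (a - 1) b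
  have hA1 : 1 ≤ A := by nlinarith
  have hB1 : 1 ≤ B := by nlinarith
  have hdivA : (a - 1) / g = A := by
    rw [hA]; exact Int.mul_ediv_cancel_left A (ne_of_gt hgpos)
  have hk' : k = 1 - (A + B) := by
    rw [hk]
    have h1 : a - 1 + b = g * (A + B) := by rw [hA, hB] at *; ring
    rw [h1, Int.mul_ediv_cancel_left _ (ne_of_gt hgpos)]
  have ea : a = g * A + 1 := by omega
  subst ea hB hk'
  refine ⟨?_, ?_, ?_, ?_⟩
  · ext m
    simp only [Set.mem_setOf_eq, Set.mem_singleton_iff, hdivA]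
    constructor
    · rintro ⟨h0, h1, h2⟩
      rcases lt_trichotomy m A with h | h | h
      · exfalso
        nlinarith [mul_nonneg (mul_nonneg hgpos.le (by omega : (0:ℤ) ≤ A + B))
          (by omega : (0:ℤ) ≤ A - 1 - m), mul_pos hgpos (by omega : (0:ℤ) < B)]
      · exact h
      · exfalso
        nlinarith [mul_nonneg (mul_nonneg hgpos.le (by omega : (0:ℤ) ≤ A + B))
          (by omega : (0:ℤ) ≤ m - A - 1), mul_pos hgpos (by omega : (0:ℤ) < B)]
    · rintro rfl
      refine ⟨by omega, by nlinarith, by nlinarith⟩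
  · ext m
    simp only [Set.mem_setOf_eq, Set.mem_singleton_iff, hdivA]
    constructor
    · rintro ⟨h0, h1⟩
      have h2 : g * (A + B) * (m - A) = 0 := by linear_combination h1
      have h3 : g * (A + B) ≠ 0 := by positivity
      have := (mul_eq_zero.mp h2).resolve_left h3
      omega
    · rintro rfl
      exact ⟨by omega, by ring⟩
  · ext m
    simp only [Set.mem_setOf_eq, Set.mem_empty_iff_false, iff_false, not_and, not_le]
    intro h0 h1
    -- 1 ≤ -(...) forces (A+B)(m-A)+A ≤ -1, hence m ≤ A-1, hence value ≤ -gB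
    have hmA : m ≤ A - 1 := by nlinarith [mul_nonneg (mul_nonneg hgpos.le (by omega : (0:ℤ) ≤ A + B)) (by omega : (0:ℤ) ≤ 0)]
    nlinarith [mul_nonneg (mul_nonneg hgpos.le (by omega : (0:ℤ) ≤ A + B))
      (by omega : (0:ℤ) ≤ A - 1 - m), mul_pos hgpos (by omega : (0:ℤ) < B)]
  · intro i hi1 hi2
    ext m
    simp only [Set.mem_setOf_eq, Set.mem_empty_iff_false, iff_false, not_and, not_le]
    intro h1
    rcases le_or_gt m (A - 1) with h | h
    · nlinarith [mul_nonneg (mul_nonneg hgpos.le (by omega : (0:ℤ) ≤ A + B))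
        (by omega : (0:ℤ) ≤ A - 1 - m), mul_pos hgpos (by omega : (0:ℤ) < B)]
    · nlinarith [mul_nonneg (mul_nonneg hgpos.le (by omega : (0:ℤ) ≤ A + B))
        (by omega : (0:ℤ) ≤ m - A), mul_pos hgpos (by omega : (0:ℤ) < B)]
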